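/- Let L be a graded subalgebra of a G-graded Lie algebra Q = ⊕_{σ∈G} Q_σ. Then the following two conditions are equivalent: (i) for every nonzero homogeneous p_σ ∈ Q_σ and every homogeneous q_τ ∈ Q_τ there exists a homogeneous element x_α ∈ L_α such that [x_α, p_σ] ≠ 0 and [x_α, _L(q_τ)] ⊆ L; (ii) Q is graded ideally absorbed into L, i.e., for every nonzero homogeneous q_τ ∈ Q_τ there exists a nonzero graded ideal I of L with Ann_L(I) = 0 and 0 ≠ [I, q_τ] ⊆ L. -/

import Mathlib

/-- The set of iterated adjoint actions of elements of the subalgebra `L` on `q`,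
i.e. `q` together with all elements `ad x₁ ⋯ ad xₙ (q)` with `x₁, …, xₙ ∈ L`. -/
inductive AdOrbit {Φ : Type*} [CommRing Φ] {Q : Type*} [LieRing Q] [LieAlgebra Φ Q]
    (L : LieSubalgebra Φ Q) (q : Q) : Q → Prop
  | base : AdOrbit L q q
  | step (x : Q) (hx : x ∈ L) {y : Q} (hy : AdOrbit L q y) : AdOrbit L q ⁅x, y⁆

/-- `_L(q)`: the `Φ`-linear span in `Q` of `q` together with all elements
`ad x₁ ⋯ ad xₙ (q)` with `x₁, …, xₙ ∈ L`. -/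
def lSpan (Φ : Type*) [CommRing Φ] {Q : Type*} [LieRing Q] [LieAlgebra Φ Q]
    (L : LieSubalgebra Φ Q) (q : Q) : Submodule Φ Q :=
  Submodule.span Φ {y | AdOrbit L q y}

set_option linter.unusedSectionVars false

section Aux
variable {Φ : Type*} [CommRing Φ] {G : Type*} [CommGroup G] [DecidableEq G]
  {Q : Type*} [LieRing Q] [LieAlgebra Φ Q]

lemma lie_sum' {ι : Type*} (x : Q) (s : Finset ι) (f : ι → Q) :
    ⁅x, ∑ i ∈ s, f i⁆ = ∑ i ∈ s, ⁅x, f i⁆ :=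
  map_sum (AddMonoidHom.mk' (fun y => ⁅x, y⁆) (lie_add x)) f s

lemma sum_lie' {ι : Type*} (x : Q) (s : Finset ι) (f : ι → Q) :
    ⁅∑ i ∈ s, f i, x⁆ = ∑ i ∈ s, ⁅f i, x⁆ :=
  map_sum (AddMonoidHom.mk' (fun y => ⁅y, x⁆) (fun a b => add_lie a b x)) f s

variable (𝒜 : G → Submodule Φ Q) [DirectSum.Decomposition 𝒜]

lemma decompose_sum' {ι : Type*} (s : Finset ι) (f : ι → Q) (σ : G) :
    (DirectSum.decompose 𝒜 (∑ i ∈ s, f i) σ : Q) =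
      ∑ i ∈ s, (DirectSum.decompose 𝒜 (f i) σ : Q) := by
  classical
  induction s using Finset.induction with
  | empty => simp
  | insert _ _ h ih =>
      rw [Finset.sum_insert h, Finset.sum_insert h, DirectSum.decompose_add,
        DirectSum.add_apply, Submodule.coe_add, ih]

/-- Reconstruct an element from its components. -/
lemma eq_sum_components (x : Q) :
    ∃ s : Finset G, x = ∑ σ ∈ s, (DirectSum.decompose 𝒜 x σ : Q) := by
  classical
  exact ⟨_, (DirectSum.sum_support_decompose 𝒜 x).symm⟩

lemma exists_ne_zero_component {x : Q} (hx : x ≠ 0) :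
    ∃ σ, (DirectSum.decompose 𝒜 x σ : Q) ≠ 0 := by
  by_contra h
  push_neg at h
  obtain ⟨s, hs⟩ := eq_sum_components 𝒜 x
  exact hx (by rw [hs]; exact Finset.sum_eq_zero fun σ _ => h σ)

variable (hbracket : ∀ (σ τ : G) (x y : Q), x ∈ 𝒜 σ → y ∈ 𝒜 τ → ⁅x, y⁆ ∈ 𝒜 (σ * τ))

include hbracket in
lemma lie_decompose_right (γ σ : G) {z : Q} (hz : z ∈ 𝒜 γ) (x : Q) :
    ⁅z, (DirectSum.decompose 𝒜 x σ : Q)⁆ = (DirectSum.decompose 𝒜 ⁅z, x⁆ (γ * σ) : Q) := by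
  classical
  conv_rhs => rw [← DirectSum.sum_support_decompose 𝒜 x]
  rw [lie_sum', decompose_sum']
  rw [Finset.sum_eq_single σ]
  · exact (DirectSum.decompose_of_mem_same 𝒜
      (hbracket γ σ z _ hz (DirectSum.decompose 𝒜 x σ).2)).symm
  · intro β _ hβ
    exact DirectSum.decompose_of_mem_ne 𝒜
      (hbracket γ β z _ hz (DirectSum.decompose 𝒜 x β).2)
      (fun h => hβ (mul_left_cancel h))
  · intro hσ
    rw [DFinsupp.notMem_support_iff] at hσ
    rw [hσ]
    simp

include hbracket in
lemma decompose_lie_left (γ σ : G) {z : Q} (hz : z ∈ 𝒜 γ) (x : Q) :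
    ⁅(DirectSum.decompose 𝒜 x σ : Q), z⁆ = (DirectSum.decompose 𝒜 ⁅x, z⁆ (σ * γ) : Q) := by
  classical
  conv_rhs => rw [← DirectSum.sum_support_decompose 𝒜 x]
  rw [sum_lie', decompose_sum']
  rw [Finset.sum_eq_single σ]
  · exact (DirectSum.decompose_of_mem_same 𝒜
      (hbracket σ γ _ z (DirectSum.decompose 𝒜 x σ).2 hz)).symm
  · intro β _ hβ
    exact DirectSum.decompose_of_mem_ne 𝒜
      (hbracket β γ _ z (DirectSum.decompose 𝒜 x β).2 hz)
      (fun h => hβ (mul_right_cancel h))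
  · intro hσ
    rw [DFinsupp.notMem_support_iff] at hσ
    rw [hσ]
    simp

lemma exists_component_lie_ne_zero {y p : Q} (h : ⁅y, p⁆ ≠ 0) :
    ∃ α, ⁅(DirectSum.decompose 𝒜 y α : Q), p⁆ ≠ 0 := by
  by_contra hc
  push_neg at hc
  apply h
  classical
  conv_lhs => rw [← DirectSum.sum_support_decompose 𝒜 y]
  rw [sum_lie']
  exact Finset.sum_eq_zero fun α _ => hc α

end Aux


section LSpan
variable {Φ : Type*} [CommRing Φ] {G : Type*} [CommGroup G] [DecidableEq G]
  {Q : Type*} [LieRing Q] [LieAlgebra Φ Q] (L : LieSubalgebra Φ Q)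

lemma mem_lSpan_self (q : Q) : q ∈ lSpan Φ L q :=
  Submodule.subset_span AdOrbit.base

lemma lSpan_lie_mem {q x m : Q} (hx : x ∈ L) (hm : m ∈ lSpan Φ L q) :
    ⁅x, m⁆ ∈ lSpan Φ L q := by
  induction hm using Submodule.span_induction with
  | mem y hy => exact Submodule.subset_span (AdOrbit.step x hx hy)
  | zero => rw [lie_zero]; exact Submodule.zero_mem _
  | add a b _ _ ha hb => rw [lie_add]; exact Submodule.add_mem _ ha hb
  | smul c a _ ha => rw [lie_smul]; exact Submodule.smul_mem _ c ha

lemma lSpan_zero_eq {m : Q} (hm : m ∈ lSpan Φ L 0) : m = 0 := by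
  have : lSpan Φ L 0 ≤ ⊥ := by
    rw [lSpan, Submodule.span_le]
    intro y hy
    induction hy with
    | base => exact Submodule.mem_bot Φ |>.mpr rfl
    | step x hx hy ih =>
        simp only [SetLike.mem_coe, Submodule.mem_bot] at ih ⊢
        rw [ih, lie_zero]
  simpa using this hm

variable (𝒜 : G → Submodule Φ Q) [DirectSum.Decomposition 𝒜]
  (hbracket : ∀ (σ τ : G) (x y : Q), x ∈ 𝒜 σ → y ∈ 𝒜 τ → ⁅x, y⁆ ∈ 𝒜 (σ * τ))
  (hLgr : ∀ x ∈ L, ∀ σ : G, (DirectSum.decompose 𝒜 x σ : Q) ∈ L)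

/-- homogeneous member of lSpan: its components stay in lSpan -/
lemma decompose_mem_lSpan_of_homog {q w : Q} {γ : G} (hw : w ∈ lSpan Φ L q)
    (hwγ : w ∈ 𝒜 γ) (σ : G) : (DirectSum.decompose 𝒜 w σ : Q) ∈ lSpan Φ L q := by
  by_cases h : γ = σ
  · subst h; rw [DirectSum.decompose_of_mem_same 𝒜 hwγ]; exact hw
  · rw [DirectSum.decompose_of_mem_ne 𝒜 hwγ h]; exact Submodule.zero_mem _

include hbracket hLgr in
lemma lSpan_graded_orbit {q : Q} {τ : G} (hq : q ∈ 𝒜 τ) {m : Q} (hm : AdOrbit L q m) :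
    ∀ σ : G, (DirectSum.decompose 𝒜 m σ : Q) ∈ lSpan Φ L q := by
  classical
  induction hm with
  | base => exact fun σ => decompose_mem_lSpan_of_homog L 𝒜 (mem_lSpan_self L q) hq σ
  | step x hx hy ih =>
      rename_i y'
      intro σ
      have hxy : ⁅x, y'⁆ = ∑ α ∈ DFinsupp.support (DirectSum.decompose 𝒜 x),
          ∑ β ∈ DFinsupp.support (DirectSum.decompose 𝒜 y'),
            ⁅(DirectSum.decompose 𝒜 x α : Q), (DirectSum.decompose 𝒜 y' β : Q)⁆ := by
        conv_lhs => rw [← DirectSum.sum_support_decompose 𝒜 x,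
          ← DirectSum.sum_support_decompose 𝒜 y']
        rw [sum_lie']
        exact Finset.sum_congr rfl fun α _ => lie_sum' _ _ _
      rw [hxy, decompose_sum']
      refine Submodule.sum_mem _ fun α _ => ?_
      rw [decompose_sum']
      refine Submodule.sum_mem _ fun β _ => ?_
      have hterm : ⁅(DirectSum.decompose 𝒜 x α : Q), (DirectSum.decompose 𝒜 y' β : Q)⁆
          ∈ lSpan Φ L q :=
        lSpan_lie_mem L (hLgr x hx α) (ih β)
      exact decompose_mem_lSpan_of_homog L 𝒜 hterm
        (hbracket α β _ _ (DirectSum.decompose 𝒜 x α).2 (DirectSum.decompose 𝒜 y' β).2) σ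

include hbracket hLgr in
/-- `lSpan` of a homogeneous element is a graded submodule. -/
lemma lSpan_graded {q : Q} {τ : G} (hq : q ∈ 𝒜 τ) {m : Q} (hm : m ∈ lSpan Φ L q)
    (σ : G) : (DirectSum.decompose 𝒜 m σ : Q) ∈ lSpan Φ L q := by
  induction hm using Submodule.span_induction with
  | mem y hy => exact lSpan_graded_orbit L 𝒜 hbracket hLgr hq hy σ
  | zero => simp
  | add a b _ _ ha hb =>
      rw [DirectSum.decompose_add, DirectSum.add_apply, Submodule.coe_add]
      exact Submodule.add_mem _ ha hb
  | smul c a _ ha =>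
      rw [DirectSum.decompose_smul, DirectSum.smul_apply, Submodule.coe_smul]
      exact Submodule.smul_mem _ c ha

end LSpan
/-- Let `L` be a graded subalgebra of a `G`-graded Lie algebra
`Q = ⊕_{σ∈G} Q_σ`.  Then the following are equivalent: (i) for every nonzero
homogeneous `p_σ ∈ Q_σ` and every homogeneous `q_τ ∈ Q_τ` there is a homogeneous
`x_α ∈ L_α` with `⁅x_α, p_σ⁆ ≠ 0` and `⁅x_α, _L(q_τ)⁆ ⊆ L`; (ii) `Q` is graded
ideally absorbed into `L`: for every nonzero homogeneous `q_τ ∈ Q_τ` there is a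
nonzero graded ideal `I` of `L` with `Ann_L(I) = 0` and `0 ≠ ⁅I, q_τ⁆ ⊆ L`. -/
theorem graded_algebra_of_quotients_iff_graded_ideally_absorbed
    {Φ : Type*} [CommRing Φ] {G : Type*} [CommGroup G] [DecidableEq G]
    {Q : Type*} [LieRing Q] [LieAlgebra Φ Q]
    (𝒜 : G → Submodule Φ Q) [DirectSum.Decomposition 𝒜]
    (hbracket : ∀ (σ τ : G) (x y : Q), x ∈ 𝒜 σ → y ∈ 𝒜 τ → ⁅x, y⁆ ∈ 𝒜 (σ * τ))
    (L : LieSubalgebra Φ Q)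
    (hLgr : ∀ x ∈ L, ∀ σ : G, (DirectSum.decompose 𝒜 x σ : Q) ∈ L) :
    (∀ (σ τ : G) (p q : Q), p ∈ 𝒜 σ → p ≠ 0 → q ∈ 𝒜 τ →
       ∃ (α : G) (x : Q), x ∈ 𝒜 α ∧ x ∈ L ∧ ⁅x, p⁆ ≠ 0 ∧
         ∀ y ∈ lSpan Φ L q, ⁅x, y⁆ ∈ L) ↔
    (∀ (τ : G) (q : Q), q ∈ 𝒜 τ → q ≠ 0 →
       ∃ I : Submodule Φ Q, I ≤ L.toSubmodule ∧
         (∀ x ∈ L, ∀ y ∈ I, ⁅x, y⁆ ∈ I) ∧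
         (∀ y ∈ I, ∀ σ : G, (DirectSum.decompose 𝒜 y σ : Q) ∈ I) ∧
         I ≠ ⊥ ∧
         (∀ x ∈ L, (∀ y ∈ I, ⁅x, y⁆ = 0) → x = 0) ∧
         (∃ y ∈ I, ⁅y, q⁆ ≠ 0) ∧ (∀ y ∈ I, ⁅y, q⁆ ∈ L)) := by
  classical
  constructor
  · -- (i) → (ii)
    intro h τ q hq hq0
    refine ⟨{ carrier := {x | x ∈ L ∧ ∀ m ∈ lSpan Φ L q, ⁅x, m⁆ ∈ L}
              add_mem' := fun {a b} ha hb => ⟨L.add_mem ha.1 hb.1,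
                fun m hm => by rw [add_lie]; exact L.add_mem (ha.2 m hm) (hb.2 m hm)⟩
              zero_mem' := ⟨L.zero_mem, fun m hm => by rw [zero_lie]; exact L.zero_mem⟩
              smul_mem' := fun c {a} ha => ⟨L.smul_mem c ha.1,
                fun m hm => by rw [smul_lie]; exact L.smul_mem c (ha.2 m hm)⟩ },
      ?_, ?_, ?_, ?_, ?_, ?_, ?_⟩
    · -- I ≤ L
      exact fun x hx => hx.1
    · -- ideal
      intro x hx y hy
      refine ⟨L.lie_mem hx hy.1, fun m hm => ?_⟩
      rw [lie_lie]
      exact sub_mem (L.lie_mem hx (hy.2 m hm)) (hy.2 ⁅x, m⁆ (lSpan_lie_mem L hx hm))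
    · -- graded
      intro y hy σ
      refine ⟨hLgr y hy.1 σ, fun m hm => ?_⟩
      have hmsum : m = ∑ β ∈ DFinsupp.support (DirectSum.decompose 𝒜 m),
          (DirectSum.decompose 𝒜 m β : Q) := (DirectSum.sum_support_decompose 𝒜 m).symm
      rw [hmsum, lie_sum']
      refine Submodule.sum_mem L.toSubmodule fun β _ => ?_
      rw [decompose_lie_left 𝒜 hbracket β σ (DirectSum.decompose 𝒜 m β).2 y]
      exact hLgr ⁅y, (DirectSum.decompose 𝒜 m β : Q)⁆
        (hy.2 _ (lSpan_graded L 𝒜 hbracket hLgr hq hm β)) (σ * β)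
    · -- I ≠ ⊥
      obtain ⟨α, x, hxα, hxL, hxq, hxspan⟩ := h τ τ q q hq hq0 hq
      rw [Submodule.ne_bot_iff]
      exact ⟨x, ⟨hxL, hxspan⟩, fun h0 => hxq (by rw [h0, zero_lie])⟩
    · -- annihilator
      intro x hxL hxzero
      by_contra hx0
      obtain ⟨σ, hσ⟩ := exists_ne_zero_component 𝒜 hx0
      obtain ⟨α, z, hzα, hzL, hzp, hzspan⟩ :=
        h σ τ _ q (DirectSum.decompose 𝒜 x σ).2 hσ hq
      have hxz : ⁅x, z⁆ = 0 := hxzero z ⟨hzL, hzspan⟩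
      have hzx : ⁅z, x⁆ = 0 := by rw [← lie_skew, hxz, neg_zero]
      apply hzp
      rw [lie_decompose_right 𝒜 hbracket α σ hzα x, hzx]
      simp
    · -- ∃ y ∈ I with ⁅y,q⁆ ≠ 0
      obtain ⟨α, x, hxα, hxL, hxq, hxspan⟩ := h τ τ q q hq hq0 hq
      exact ⟨x, ⟨hxL, hxspan⟩, hxq⟩
    · -- ⁅I, q⁆ ⊆ L
      exact fun y hy => hy.2 q (mem_lSpan_self L q)
  · -- (ii) → (i)
    intro h σ τ p q hp hp0 hq
    obtain ⟨J, hJL, hJid, hJgr, hJne, hJann, ⟨y, hyJ, hyp⟩, hJp⟩ := h σ p hp hp0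
    by_cases hq0 : q = 0
    · subst hq0
      obtain ⟨α, hα⟩ := exists_component_lie_ne_zero 𝒜 hyp
      refine ⟨α, _, (DirectSum.decompose 𝒜 y α).2,
        hLgr y ((L.mem_toSubmodule).mp (hJL hyJ)) α, hα, fun m hm => ?_⟩
      rw [lSpan_zero_eq L hm, lie_zero]
      exact L.zero_mem
    · obtain ⟨I, hIL, hIid, hIgr, hIne, hIann, _, hIq⟩ := h τ q hq hq0
      have hILmem : ∀ z ∈ I, z ∈ L := fun z hz => (L.mem_toSubmodule).mp (hIL hz)
      have hnegI : ∀ z ∈ I, ∀ x ∈ L, ⁅z, x⁆ ∈ I := by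
        intro z hz x hx
        have h1 : ⁅x, z⁆ ∈ I := hIid x hx z hz
        have h2 := I.neg_mem h1
        rwa [lie_skew] at h2
      have hmain : ∀ m ∈ lSpan Φ L q, ∀ z ∈ I, ⁅z, m⁆ ∈ L := by
        intro m hm
        induction hm using Submodule.span_induction with
        | mem w hw =>
            induction hw with
            | base => exact fun z hz => hIq z hz
            | step x hx hw ih =>
                intro z hz
                rw [leibniz_lie]
                exact L.add_mem (ih ⁅z, x⁆ (hnegI z hz x hx)) (L.lie_mem hx (ih z hz))
        | zero => exact fun z _ => by rw [lie_zero]; exact L.zero_mem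
        | add a b _ _ ha hb =>
            exact fun z hz => by rw [lie_add]; exact L.add_mem (ha z hz) (hb z hz)
        | smul c a _ ha =>
            exact fun z hz => by rw [lie_smul]; exact L.smul_mem c (ha z hz)
      have hzex : ∃ z ∈ I, ⁅z, p⁆ ≠ 0 := by
        by_contra hc
        push_neg at hc
        have hypL : ⁅y, p⁆ ∈ L := hJp y hyJ
        have hne : ∃ z ∈ I, ⁅⁅y, p⁆, z⁆ ≠ 0 := by
          by_contra hc2
          push_neg at hc2
          exact hyp (hIann _ hypL hc2)
        obtain ⟨z, hzI, hzz⟩ := hne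
        apply hzz
        have h1 : ⁅z, ⁅y, p⁆⁆ = ⁅⁅z, y⁆, p⁆ + ⁅y, ⁅z, p⁆⁆ := leibniz_lie z y p
        have hzyI : ⁅z, y⁆ ∈ I := hnegI z hzI y ((L.mem_toSubmodule).mp (hJL hyJ))
        rw [hc z hzI, lie_zero, hc _ hzyI, zero_add] at h1
        rw [← lie_skew, h1, neg_zero]
      obtain ⟨z, hzI, hzp⟩ := hzex
      obtain ⟨α, hα⟩ := exists_component_lie_ne_zero 𝒜 hzp
      have hzαI : (DirectSum.decompose 𝒜 z α : Q) ∈ I := hIgr z hzI α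
      exact ⟨α, _, (DirectSum.decompose 𝒜 z α).2, hILmem _ hzαI, hα,
        fun m hm => hmain m hm _ hzαI⟩
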